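/- Let B be a commutative ring that is free of finite rank n as a ℤ-module, let A be a subring of B that is also free of rank n as a ℤ-module, and let ℓ be a prime that does not divide the (finite) index of A in B as an additive subgroup. Then the inclusion A → B induces a ring isomorphism A ⧸ (ℓ·A) ≃+* B ⧸ (ℓ·B). -/
import Mathlib

private lemma smul_bij_aux {Q : Type*} [AddCommGroup Q] (ℓ : ℕ)
    (h : Nat.Coprime ℓ (Nat.card Q)) :
    Function.Bijective (fun x : Q => (ℓ : ℤ) • x) := by
  have key : ∀ x : Q, ((ℓ : ℤ) * Nat.gcdA ℓ (Nat.card Q)) • x = x := by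
    intro x
    have h1 : ((Nat.gcd ℓ (Nat.card Q) : ℤ)) = ℓ * Nat.gcdA ℓ (Nat.card Q)
        + (Nat.card Q) * Nat.gcdB ℓ (Nat.card Q) := Nat.gcd_eq_gcd_ab ℓ (Nat.card Q)
    have hg1 : Nat.gcd ℓ (Nat.card Q) = 1 := h
    have h2 : ((1 : ℤ)) = ℓ * Nat.gcdA ℓ (Nat.card Q)
        + (Nat.card Q) * Nat.gcdB ℓ (Nat.card Q) := by
      rw [← h1, hg1]; norm_num
    have hm : ((Nat.card Q : ℤ)) • x = 0 := by
      have := card_nsmul_eq_zero' (x := x)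
      simpa using this
    calc ((ℓ : ℤ) * Nat.gcdA ℓ (Nat.card Q)) • x
        = ((ℓ : ℤ) * Nat.gcdA ℓ (Nat.card Q)) • x
          + Nat.gcdB ℓ (Nat.card Q) • (((Nat.card Q : ℤ)) • x) := by rw [hm]; simp
      _ = ((ℓ * Nat.gcdA ℓ (Nat.card Q) + (Nat.card Q) * Nat.gcdB ℓ (Nat.card Q) : ℤ)) • x := by
          rw [add_smul, smul_smul]; ring_nf
      _ = (1 : ℤ) • x := by rw [← h2]
      _ = x := one_smul _ _
  constructor
  · intro x y hxy
    simp only at hxy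
    have : (Nat.gcdA ℓ (Nat.card Q)) • ((ℓ : ℤ) • x) = (Nat.gcdA ℓ (Nat.card Q)) • ((ℓ : ℤ) • y) := by
      rw [hxy]
    rw [smul_smul, smul_smul, mul_comm] at this
    rw [← key x, ← key y, this]
  · intro x
    refine ⟨Nat.gcdA ℓ (Nat.card Q) • x, ?_⟩
    simp only [smul_smul]
    exact key x

set_option maxHeartbeats 1000000 in
set_option synthInstance.maxHeartbeats 400000 in
theorem quotient_iso_of_coprime_index (B : Type*) [CommRing B] [Module.Free ℤ B]
    (n : ℕ) (hB : Module.finrank ℤ B = n)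
    (A : Subring B) [Module.Free ℤ A] (hA : Module.finrank ℤ A = n)
    (ℓ : ℕ) (hℓ : ℓ.Prime)
    (hcop : ¬ (ℓ ∣ Nat.card (B ⧸ A.toAddSubgroup))) :
    ∃ e : (A ⧸ Ideal.span {(ℓ : A)}) ≃+* (B ⧸ Ideal.span {(ℓ : B)}),
      ∀ a : A, e (Ideal.Quotient.mk _ a) = Ideal.Quotient.mk _ (a : B) := by
  set Q := B ⧸ A.toAddSubgroup
  have hco : Nat.Coprime ℓ (Nat.card Q) := (hℓ.coprime_iff_not_dvd).mpr hcop
  have hbij := smul_bij_aux ℓ hco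
  -- the ring hom A → B/ℓB
  set f : A →+* B ⧸ Ideal.span {(ℓ : B)} :=
    (Ideal.Quotient.mk (Ideal.span {(ℓ : B)})).comp A.subtype with hf
  have hker : ∀ a ∈ Ideal.span {(ℓ : A)}, f a = 0 := by
    intro a ha
    rw [Ideal.mem_span_singleton] at ha
    obtain ⟨c, rfl⟩ := ha
    have hc : f ((ℓ : A) * c) = Ideal.Quotient.mk _ ((ℓ : B) * (c : B)) := by
      simp only [hf, RingHom.comp_apply]
      congr 1
      try push_cast
      try ring
    rw [hc, Ideal.Quotient.eq_zero_iff_mem]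
    exact Ideal.mul_mem_right _ _ (Ideal.mem_span_singleton_self _)
  set g := Ideal.Quotient.lift (Ideal.span {(ℓ : A)}) f hker with hg
  have hgmk : ∀ a : A, g (Ideal.Quotient.mk _ a) = Ideal.Quotient.mk _ (a : B) := by
    intro a; simp [hg, hf]
  have hinj : Function.Injective g := by
    rw [injective_iff_map_eq_zero]
    intro x hx
    obtain ⟨a, rfl⟩ := Ideal.Quotient.mk_surjective x
    rw [hgmk] at hx
    rw [Ideal.Quotient.eq_zero_iff_mem, Ideal.mem_span_singleton] at hx
    obtain ⟨b, hb⟩ := hx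
    have hQ : (ℓ : ℤ) • (QuotientAddGroup.mk b : Q) = 0 := by
      have : (QuotientAddGroup.mk ((ℓ : ℤ) • b) : Q) = (ℓ : ℤ) • (QuotientAddGroup.mk b : Q) := by
        simp
      rw [← this]
      rw [QuotientAddGroup.eq_zero_iff]
      have : (ℓ : ℤ) • b = (a : B) := by rw [zsmul_eq_mul, hb]; push_cast; ring
      rw [this]
      exact a.2
    have hb0 : (QuotientAddGroup.mk b : Q) = 0 :=
      hbij.1 (show (fun x : Q => (ℓ : ℤ) • x) (QuotientAddGroup.mk b)
        = (fun x : Q => (ℓ : ℤ) • x) 0 by simpa using hQ)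
    rw [QuotientAddGroup.eq_zero_iff] at hb0
    rw [Ideal.Quotient.eq_zero_iff_mem, Ideal.mem_span_singleton]
    exact ⟨⟨b, hb0⟩, by ext; push_cast; rw [hb]⟩
  have hsurj : Function.Surjective g := by
    intro y
    obtain ⟨b, rfl⟩ := Ideal.Quotient.mk_surjective y
    obtain ⟨q, hq⟩ := hbij.2 (QuotientAddGroup.mk b : Q)
    obtain ⟨b', rfl⟩ := QuotientAddGroup.mk_surjective q
    simp only at hq
    have hmem : b - (ℓ : ℤ) • b' ∈ A.toAddSubgroup := by
      rw [← QuotientAddGroup.eq_zero_iff]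
      have : (QuotientAddGroup.mk (b - (ℓ : ℤ) • b') : Q)
          = QuotientAddGroup.mk b - (ℓ : ℤ) • (QuotientAddGroup.mk b' : Q) := by simp
      rw [this, hq, sub_self]
    refine ⟨Ideal.Quotient.mk _ ⟨b - (ℓ : ℤ) • b', hmem⟩, ?_⟩
    rw [hgmk]
    rw [Ideal.Quotient.eq]
    have : ((⟨b - (ℓ : ℤ) • b', hmem⟩ : A) : B) - b = -((ℓ : B) * b') := by
      push_cast; rw [zsmul_eq_mul]; push_cast; ring
    rw [this]
    exact Submodule.neg_mem _ (Ideal.mul_mem_right _ _ (Ideal.mem_span_singleton_self _))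
  exact ⟨RingEquiv.ofBijective g ⟨hinj, hsurj⟩, hgmk⟩
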